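/- Let S = {u_1, ..., u_n} ⊂ ℝ^p be a set of n ≥ 3 distinct points. Then there exist at least n/6 points u ∈ S having the property that for some unit vector v ∈ ℝ^p (‖v‖ = 1), (1/n) · Σ_{i : u_i ≠ u} ⟨(u_i − u)/‖u_i − u‖, v⟩ ≥ 1/4. Precisely, the cardinality of the set of points u ∈ S with this property is at least n/6. -/

import Mathlib

open scoped RealInnerProductSpace
open Finset

private lemma scalar_cos (a b c t : ℝ) (ha : 0 < a) (hb : 0 < b) (hc : 0 < c)
    (h1 : c ≤ a + b) (h2 : a ≤ b + c) (h3 : b ≤ a + c)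
    (ht : c ^ 2 = a ^ 2 + b ^ 2 - 2 * t) :
    1 ≤ a⁻¹ * (b⁻¹ * t) + a⁻¹ * (c⁻¹ * (a ^ 2 - t)) + b⁻¹ * (c⁻¹ * (b ^ 2 - t)) := by
  have ht' : t = (a ^ 2 + b ^ 2 - c ^ 2) / 2 := by linarith
  subst ht'
  have habc : 0 < a * b * c := by positivity
  have key : a * b * c ≤ ((a ^ 2 + b ^ 2 - c ^ 2) / 2) * c
      + (a ^ 2 - (a ^ 2 + b ^ 2 - c ^ 2) / 2) * b
      + (b ^ 2 - (a ^ 2 + b ^ 2 - c ^ 2) / 2) * a := by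
    nlinarith [mul_nonneg (mul_nonneg (sub_nonneg.2 h1) (sub_nonneg.2 h2)) (sub_nonneg.2 h3)]
  have heq : a⁻¹ * (b⁻¹ * ((a ^ 2 + b ^ 2 - c ^ 2) / 2))
      + a⁻¹ * (c⁻¹ * (a ^ 2 - (a ^ 2 + b ^ 2 - c ^ 2) / 2))
      + b⁻¹ * (c⁻¹ * (b ^ 2 - (a ^ 2 + b ^ 2 - c ^ 2) / 2))
      = (((a ^ 2 + b ^ 2 - c ^ 2) / 2) * c
        + (a ^ 2 - (a ^ 2 + b ^ 2 - c ^ 2) / 2) * b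
        + (b ^ 2 - (a ^ 2 + b ^ 2 - c ^ 2) / 2) * a) / (a * b * c) := by
    field_simp
  rw [heq, le_div_iff₀ habc]
  linarith

private lemma cos_three {E : Type*} [NormedAddCommGroup E] [InnerProductSpace ℝ E]
    {a b c : E} (hab : a ≠ b) (hac : a ≠ c) (hbc : b ≠ c) :
    1 ≤ ⟪‖b - a‖⁻¹ • (b - a), ‖c - a‖⁻¹ • (c - a)⟫
      + ⟪‖a - b‖⁻¹ • (a - b), ‖c - b‖⁻¹ • (c - b)⟫
      + ⟪‖a - c‖⁻¹ • (a - c), ‖b - c‖⁻¹ • (b - c)⟫ := by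
  have hx : b - a ≠ 0 := sub_ne_zero.2 (Ne.symm hab)
  have hy : c - a ≠ 0 := sub_ne_zero.2 (Ne.symm hac)
  have hz : c - b ≠ 0 := sub_ne_zero.2 (Ne.symm hbc)
  have hP : (0:ℝ) < ‖b - a‖ := norm_pos_iff.2 hx
  have hQ : (0:ℝ) < ‖c - a‖ := norm_pos_iff.2 hy
  have hR : (0:ℝ) < ‖c - b‖ := norm_pos_iff.2 hz
  have e1 : a - b = -(b - a) := by abel
  have e2 : c - b = (c - a) - (b - a) := by abel
  have e3 : a - c = -(c - a) := by abel
  have e4 : b - c = (b - a) - (c - a) := by abel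
  have key2 : ⟪a - b, c - b⟫ = ‖b - a‖ ^ 2 - ⟪b - a, c - a⟫ := by
    rw [e1, e2, inner_neg_left, inner_sub_right, real_inner_self_eq_norm_sq]
    ring
  have key3 : ⟪a - c, b - c⟫ = ‖c - a‖ ^ 2 - ⟪b - a, c - a⟫ := by
    rw [e3, e4, inner_neg_left, inner_sub_right, real_inner_self_eq_norm_sq,
      real_inner_comm]
    ring
  have ht : ‖c - b‖ ^ 2 = ‖b - a‖ ^ 2 + ‖c - a‖ ^ 2 - 2 * ⟪b - a, c - a⟫ := by
    rw [e2, norm_sub_sq_real, real_inner_comm]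
    ring
  have h1 : ‖c - b‖ ≤ ‖b - a‖ + ‖c - a‖ := by
    rw [e2]
    calc ‖(c - a) - (b - a)‖ ≤ ‖c - a‖ + ‖b - a‖ := norm_sub_le _ _
      _ = ‖b - a‖ + ‖c - a‖ := by ring
  have h2 : ‖b - a‖ ≤ ‖c - a‖ + ‖c - b‖ := by
    have h : b - a = (c - a) - (c - b) := by abel
    rw [h]
    exact norm_sub_le _ _
  have h3 : ‖c - a‖ ≤ ‖b - a‖ + ‖c - b‖ := by
    have h : c - a = (b - a) + (c - b) := by abel
    rw [h]
    exact norm_add_le _ _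
  have T1 : ⟪‖b - a‖⁻¹ • (b - a), ‖c - a‖⁻¹ • (c - a)⟫
      = ‖b - a‖⁻¹ * (‖c - a‖⁻¹ * ⟪b - a, c - a⟫) := by
    rw [real_inner_smul_left, real_inner_smul_right]
  have T2 : ⟪‖a - b‖⁻¹ • (a - b), ‖c - b‖⁻¹ • (c - b)⟫
      = ‖b - a‖⁻¹ * (‖c - b‖⁻¹ * (‖b - a‖ ^ 2 - ⟪b - a, c - a⟫)) := by
    rw [real_inner_smul_left, real_inner_smul_right, norm_sub_rev a b, key2]
  have T3 : ⟪‖a - c‖⁻¹ • (a - c), ‖b - c‖⁻¹ • (b - c)⟫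
      = ‖c - a‖⁻¹ * (‖b - c‖⁻¹ * (‖c - a‖ ^ 2 - ⟪b - a, c - a⟫)) := by
    rw [real_inner_smul_left, real_inner_smul_right, norm_sub_rev a c, key3]
  rw [T1, T2, T3, norm_sub_rev b c]
  exact scalar_cos _ _ _ _ hP hQ hR h1 h2 h3 ht

private lemma sum_erase_swap {α : Type*} [DecidableEq α] (e : Finset α) (g : α → α → ℝ) :
    ∑ i ∈ e, ∑ j ∈ e.erase i, g i j = ∑ i ∈ e, ∑ j ∈ e.erase i, g j i := by
  have h : ∀ f : α → α → ℝ, ∑ i ∈ e, ∑ j ∈ e.erase i, f i j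
      = ∑ i ∈ e, ∑ j ∈ e, if j ≠ i then f i j else 0 := by
    intro f
    refine Finset.sum_congr rfl fun i _ => ?_
    rw [← Finset.filter_ne', Finset.sum_filter]
  rw [h, h fun i j => g j i, Finset.sum_comm]
  refine Finset.sum_congr rfl fun a _ => Finset.sum_congr rfl fun b _ => ?_
  exact if_congr ne_comm rfl rfl

private noncomputable def wvec {p n : ℕ} (u : Fin n → EuclideanSpace ℝ (Fin p))
    (i j : Fin n) : EuclideanSpace ℝ (Fin p) := ‖u i - u j‖⁻¹ • (u i - u j)

private noncomputable def svec {p n : ℕ} (u : Fin n → EuclideanSpace ℝ (Fin p))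
    (j : Fin n) : EuclideanSpace ℝ (Fin p) := ∑ i ∈ Finset.univ.erase j, wvec u i j

/-- For a set `S = {u 1, …, u n} ⊂ ℝ^p` of `n ≥ 3` distinct points, there exist at
least `n/6` points `u j ∈ S` with the property that for some unit vector `v`,
`(1/n) · ∑_{i : u i ≠ u j} ⟨(u i − u j)/‖u i − u j‖, v⟩ ≥ 1/4`. -/
theorem many_good_vantage_points {p n : ℕ} (hn : 3 ≤ n)
    (u : Fin n → EuclideanSpace ℝ (Fin p)) (hu : Function.Injective u) :
    (n : ℝ) / 6 ≤
      ({j : Fin n | ∃ v : EuclideanSpace ℝ (Fin p), ‖v‖ = 1 ∧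
          (1 : ℝ) / (n : ℝ) *
              ∑ i ∈ Finset.univ.erase j, ⟪‖u i - u j‖⁻¹ • (u i - u j), v⟫ ≥ 1 / 4}.ncard
        : ℝ) := by
  classical
  have hn3 : (3:ℝ) ≤ (n:ℝ) := by exact_mod_cast hn
  have hn0 : (0:ℝ) < (n:ℝ) := by linarith
  have hne_u : ∀ {i j : Fin n}, i ≠ j → u i - u j ≠ 0 := by
    intro i j h
    exact sub_ne_zero.2 fun hh => h (hu hh)
  have hwnorm : ∀ i j : Fin n, i ≠ j → ‖wvec u i j‖ = 1 := by
    intro i j hij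
    exact norm_smul_inv_norm (hne_u hij)
  have hself : ∀ i j : Fin n, i ≠ j → ⟪wvec u i j, wvec u i j⟫ = 1 := by
    intro i j hij
    rw [real_inner_self_eq_norm_sq, hwnorm i j hij]
    norm_num
  have hms : ∀ j : Fin n, ‖svec u j‖ ≤ (n:ℝ) - 1 := by
    intro j
    have h1 : ‖svec u j‖ ≤ ∑ i ∈ univ.erase j, ‖wvec u i j‖ := norm_sum_le _ _
    have h2 : ∑ i ∈ univ.erase j, ‖wvec u i j‖ = ((univ.erase j).card : ℝ) := by
      rw [Finset.sum_congr rfl fun i hi => hwnorm i j (Finset.mem_erase.1 hi).1]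
      simp
    have h3 : ((univ.erase j).card : ℝ) = (n:ℝ) - 1 := by
      rw [Finset.card_erase_of_mem (mem_univ j), card_univ, Fintype.card_fin,
        Nat.cast_sub (by omega : 1 ≤ n), Nat.cast_one]
    linarith
  have hinner : ∀ (j : Fin n) (v : EuclideanSpace ℝ (Fin p)),
      (∑ i ∈ Finset.univ.erase j, ⟪‖u i - u j‖⁻¹ • (u i - u j), v⟫) = ⟪svec u j, v⟫ := by
    intro j v
    simp only [svec, wvec, sum_inner]
  set F : Finset (Fin n) := univ.filter (fun j => (n:ℝ)/4 ≤ ‖svec u j‖) with hF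
  have hset : {j : Fin n | ∃ v : EuclideanSpace ℝ (Fin p), ‖v‖ = 1 ∧
      (1 : ℝ) / (n : ℝ) *
        ∑ i ∈ Finset.univ.erase j, ⟪‖u i - u j‖⁻¹ • (u i - u j), v⟫ ≥ 1 / 4} = ↑F := by
    ext j
    simp only [Set.mem_setOf_eq, hF, Finset.coe_filter, Finset.mem_univ, true_and]
    constructor
    · rintro ⟨v, hv, hineq⟩
      rw [ge_iff_le, hinner j v] at hineq
      have hcs : ⟪svec u j, v⟫ ≤ ‖svec u j‖ := by
        calc ⟪svec u j, v⟫ ≤ ‖svec u j‖ * ‖v‖ := real_inner_le_norm _ _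
          _ = ‖svec u j‖ := by rw [hv, mul_one]
      have hmul := mul_le_mul_of_nonneg_left hineq (le_of_lt hn0)
      have hid : (n:ℝ) * (1 / (n:ℝ) * ⟪svec u j, v⟫) = ⟪svec u j, v⟫ := by
        field_simp
      rw [hid] at hmul
      nlinarith
    · intro h
      have hpos : (0:ℝ) < ‖svec u j‖ := by linarith
      have hne : svec u j ≠ 0 := by
        intro h0
        rw [h0, norm_zero] at hpos
        linarith
      refine ⟨‖svec u j‖⁻¹ • svec u j, norm_smul_inv_norm hne, ?_⟩
      rw [ge_iff_le, hinner j _, real_inner_smul_right, real_inner_self_eq_norm_sq]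
      have hid : ‖svec u j‖⁻¹ * ‖svec u j‖ ^ 2 = ‖svec u j‖ := by
        field_simp
      rw [hid]
      have := mul_le_mul_of_nonneg_left h (le_of_lt (by positivity : (0:ℝ) < 1 / (n:ℝ)))
      have hid2 : 1 / (n:ℝ) * ((n:ℝ)/4) = 1/4 := by field_simp
      linarith
  rw [hset, Set.ncard_coe_finset]
  by_cases hall : ∀ j : Fin n, (n:ℝ)/4 ≤ ‖svec u j‖
  · have hFu : F = univ := by
      rw [hF, Finset.filter_true_of_mem fun j _ => hall j]
    rw [hFu, card_univ, Fintype.card_fin]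
    linarith
  push_neg at hall
  obtain ⟨k, hk⟩ := hall
  have hecard : ((univ.erase k).card : ℝ) = (n:ℝ) - 1 := by
    rw [Finset.card_erase_of_mem (mem_univ k), card_univ, Fintype.card_fin,
      Nat.cast_sub (by omega : 1 ≤ n), Nat.cast_one]
  -- Step: per-point inequality  1 + ∑_{j} cos(angle at i between j and k) ≤ ‖svec u i‖
  have step : ∀ i ∈ univ.erase k,
      1 + ∑ j ∈ (univ.erase k).erase i, ⟪wvec u j i, wvec u k i⟫ ≤ ‖svec u i‖ := by
    intro i hi
    have hik : i ≠ k := (Finset.mem_erase.1 hi).1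
    have hsi : ⟪svec u i, wvec u k i⟫
        = ∑ j ∈ univ.erase i, ⟪wvec u j i, wvec u k i⟫ := by
      simp only [svec, sum_inner]
    have hkmem : k ∈ univ.erase i := Finset.mem_erase.2 ⟨Ne.symm hik, mem_univ k⟩
    have hsplit : ∑ j ∈ univ.erase i, ⟪wvec u j i, wvec u k i⟫
        = ⟪wvec u k i, wvec u k i⟫
          + ∑ j ∈ (univ.erase i).erase k, ⟪wvec u j i, wvec u k i⟫ :=
      (Finset.add_sum_erase _ _ hkmem).symm
    have hsets : (univ.erase i).erase k = (univ.erase k).erase i := by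
      ext x
      simp only [Finset.mem_erase, Finset.mem_univ, and_true]
      tauto
    have hcs : ⟪svec u i, wvec u k i⟫ ≤ ‖svec u i‖ := by
      calc ⟪svec u i, wvec u k i⟫ ≤ ‖svec u i‖ * ‖wvec u k i‖ := real_inner_le_norm _ _
        _ = ‖svec u i‖ := by rw [hwnorm k i (Ne.symm hik), mul_one]
    rw [hsi, hsplit, hsets, hself k i (Ne.symm hik)] at hcs
    linarith
  have hmain : ((n:ℝ) - 1)
      + ∑ i ∈ univ.erase k, ∑ j ∈ (univ.erase k).erase i, ⟪wvec u j i, wvec u k i⟫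
      ≤ ∑ i ∈ univ.erase k, ‖svec u i‖ := by
    have h := Finset.sum_le_sum step
    rw [Finset.sum_add_distrib, Finset.sum_const, nsmul_eq_mul, mul_one, hecard] at h
    exact h
  -- Step: B = ‖svec u k‖² − (n−1)
  have hB : ∑ i ∈ univ.erase k, ∑ j ∈ (univ.erase k).erase i, ⟪wvec u i k, wvec u j k⟫
      = ‖svec u k‖ ^ 2 - ((n:ℝ) - 1) := by
    have h1 : ‖svec u k‖ ^ 2
        = ∑ i ∈ univ.erase k, ∑ j ∈ univ.erase k, ⟪wvec u i k, wvec u j k⟫ := by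
      rw [← real_inner_self_eq_norm_sq]
      simp only [svec, sum_inner, inner_sum]
      exact Finset.sum_comm
    have h2 : ∀ i ∈ univ.erase k, ∑ j ∈ univ.erase k, ⟪wvec u i k, wvec u j k⟫
        = 1 + ∑ j ∈ (univ.erase k).erase i, ⟪wvec u i k, wvec u j k⟫ := by
      intro i hi
      rw [← Finset.add_sum_erase _ _ hi, hself i k (Finset.mem_erase.1 hi).1]
    rw [Finset.sum_congr rfl h2, Finset.sum_add_distrib, Finset.sum_const,
      nsmul_eq_mul, mul_one, hecard] at h1
    linarith
  -- Step: triangle sum  (n−1)(n−2) ≤ 2A + B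
  have hT : ((n:ℝ) - 1) * ((n:ℝ) - 2)
      ≤ 2 * (∑ i ∈ univ.erase k, ∑ j ∈ (univ.erase k).erase i, ⟪wvec u j i, wvec u k i⟫)
        + (‖svec u k‖ ^ 2 - ((n:ℝ) - 1)) := by
    have htri : ∀ i ∈ univ.erase k, ∀ j ∈ (univ.erase k).erase i,
        (1:ℝ) ≤ ⟪wvec u j i, wvec u k i⟫ + ⟪wvec u i j, wvec u k j⟫
          + ⟪wvec u i k, wvec u j k⟫ := by
      intro i hi j hj
      have hik : i ≠ k := (Finset.mem_erase.1 hi).1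
      have hji : j ≠ i := (Finset.mem_erase.1 hj).1
      have hjk : j ≠ k := (Finset.mem_erase.1 (Finset.mem_erase.1 hj).2).1
      have hab : u i ≠ u j := fun h => (Ne.symm hji) (hu h)
      have hac : u i ≠ u k := fun h => hik (hu h)
      have hbc : u j ≠ u k := fun h => hjk (hu h)
      simp only [wvec]
      exact cos_three hab hac hbc
    have hsum : ∑ i ∈ univ.erase k, ∑ j ∈ (univ.erase k).erase i, (1:ℝ)
        ≤ ∑ i ∈ univ.erase k, ∑ j ∈ (univ.erase k).erase i,
            (⟪wvec u j i, wvec u k i⟫ + ⟪wvec u i j, wvec u k j⟫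
              + ⟪wvec u i k, wvec u j k⟫) :=
      Finset.sum_le_sum fun i hi => Finset.sum_le_sum (htri i hi)
    have hLHS : ∑ i ∈ univ.erase k, ∑ j ∈ (univ.erase k).erase i, (1:ℝ)
        = ((n:ℝ) - 1) * ((n:ℝ) - 2) := by
      have hinner1 : ∀ i ∈ univ.erase k, ∑ j ∈ (univ.erase k).erase i, (1:ℝ)
          = (n:ℝ) - 2 := by
        intro i hi
        rw [Finset.sum_const, nsmul_eq_mul, mul_one, Finset.card_erase_of_mem hi,
          Finset.card_erase_of_mem (mem_univ k), card_univ, Fintype.card_fin]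
        rw [Nat.cast_sub (by omega : 1 ≤ n - 1), Nat.cast_sub (by omega : 1 ≤ n),
          Nat.cast_one]
        ring
      rw [Finset.sum_congr rfl hinner1, Finset.sum_const, nsmul_eq_mul, hecard]
    have hsplit : ∑ i ∈ univ.erase k, ∑ j ∈ (univ.erase k).erase i,
          (⟪wvec u j i, wvec u k i⟫ + ⟪wvec u i j, wvec u k j⟫
            + ⟪wvec u i k, wvec u j k⟫)
        = (∑ i ∈ univ.erase k, ∑ j ∈ (univ.erase k).erase i, ⟪wvec u j i, wvec u k i⟫)
          + (∑ i ∈ univ.erase k, ∑ j ∈ (univ.erase k).erase i, ⟪wvec u i j, wvec u k j⟫)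
          + (∑ i ∈ univ.erase k, ∑ j ∈ (univ.erase k).erase i, ⟪wvec u i k, wvec u j k⟫) := by
      simp only [Finset.sum_add_distrib]
    have hswap : ∑ i ∈ univ.erase k, ∑ j ∈ (univ.erase k).erase i, ⟪wvec u i j, wvec u k j⟫
        = ∑ i ∈ univ.erase k, ∑ j ∈ (univ.erase k).erase i, ⟪wvec u j i, wvec u k i⟫ := by
      exact (sum_erase_swap (univ.erase k) fun i j => ⟪wvec u j i, wvec u k i⟫).symm
    rw [hLHS, hsplit, hswap, hB] at hsum
    linarith
  -- Step: bound the sum of norms by counting good points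
  have hknotF : k ∉ F := by
    rw [hF, Finset.mem_filter]
    push_neg
    intro _
    exact hk
  have hFsub : F ⊆ univ.erase k := by
    intro j hj
    refine Finset.mem_erase.2 ⟨?_, mem_univ j⟩
    intro hjk
    rw [hjk] at hj
    exact hknotF hj
  have hcardle : F.card ≤ (univ.erase k).card := Finset.card_le_card hFsub
  have hsum_bound : ∑ i ∈ univ.erase k, ‖svec u i‖
      ≤ (F.card : ℝ) * ((n:ℝ) - 1) + (((n:ℝ) - 1) - (F.card : ℝ)) * ((n:ℝ)/4) := by
    rw [← Finset.sum_filter_add_sum_filter_not (univ.erase k) (· ∈ F)]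
    have hfilt : (univ.erase k).filter (· ∈ F) = F := by
      rw [Finset.filter_mem_eq_inter]
      exact Finset.inter_eq_right.2 hFsub
    have hb1 : ∑ i ∈ (univ.erase k).filter (· ∈ F), ‖svec u i‖
        ≤ (F.card : ℝ) * ((n:ℝ) - 1) := by
      rw [hfilt]
      calc ∑ i ∈ F, ‖svec u i‖ ≤ ∑ i ∈ F, ((n:ℝ) - 1) :=
            Finset.sum_le_sum fun i _ => hms i
        _ = (F.card : ℝ) * ((n:ℝ) - 1) := by rw [Finset.sum_const, nsmul_eq_mul]
    have hfilt2 : (univ.erase k).filter (· ∉ F) = univ.erase k \ F := by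
      rw [Finset.sdiff_eq_filter]
    have hcard2 : (((univ.erase k).filter (· ∉ F)).card : ℝ)
        = ((n:ℝ) - 1) - (F.card : ℝ) := by
      rw [hfilt2, Finset.card_sdiff_of_subset hFsub, Nat.cast_sub hcardle, hecard]
    have hb2 : ∑ i ∈ (univ.erase k).filter (· ∉ F), ‖svec u i‖
        ≤ (((n:ℝ) - 1) - (F.card : ℝ)) * ((n:ℝ)/4) := by
      have hptw : ∀ i ∈ (univ.erase k).filter (· ∉ F), ‖svec u i‖ ≤ (n:ℝ)/4 := by
        intro i hi
        have hiF : i ∉ F := (Finset.mem_filter.1 hi).2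
        rw [hF, Finset.mem_filter] at hiF
        push_neg at hiF
        exact le_of_lt (hiF (mem_univ i))
      calc ∑ i ∈ (univ.erase k).filter (· ∉ F), ‖svec u i‖
          ≤ ∑ i ∈ (univ.erase k).filter (· ∉ F), ((n:ℝ)/4) :=
            Finset.sum_le_sum hptw
        _ = (((n:ℝ) - 1) - (F.card : ℝ)) * ((n:ℝ)/4) := by
            rw [Finset.sum_const, nsmul_eq_mul, hcard2]
    linarith
  -- Final arithmetic
  have hG0 : (0:ℝ) ≤ (F.card : ℝ) := Nat.cast_nonneg _
  have hmk0 : (0:ℝ) ≤ ‖svec u k‖ := norm_nonneg _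
  have h34 : (0:ℝ) ≤ 3 * (n:ℝ) - 4 := by linarith
  have hmksq : ‖svec u k‖ ^ 2 ≤ (n:ℝ)^2/16 := by
    nlinarith
  nlinarith [hmain, hT, hsum_bound, hmksq, hG0, h34, hn3,
    mul_nonneg hG0 h34, sq_nonneg ((n:ℝ) - 3)]
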